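/- Let n ≥ 3. Define Dₙ as the set of d > 0 such that for all x, y ∈ ℝⁿ with |x−y| = d, there exists a finite set S ⊆ ℝⁿ containing x and y such that every unit-distance preserving map f: S → ℂⁿ satisfies φₙ(f(x),f(y)) = d². If d ∈ Dₙ, then (2/n)·d ∈ Dₙ. -/

import Mathlib

noncomputable def phi (n : ℕ) (x y : Fin n → ℂ) : ℂ := ∑ i, (x i - y i) ^ 2

/-- `f` preserves unit distance on the set `S`. -/
def UnitPreservingOn (n : ℕ) (S : Set (EuclideanSpace ℝ (Fin n)))
    (f : EuclideanSpace ℝ (Fin n) → (Fin n → ℂ)) : Prop :=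
  ∀ a ∈ S, ∀ b ∈ S, dist a b = 1 → phi n (f a) (f b) = 1

/-- `d ∈ Dₙ`: `d > 0` and for all `x y` at distance `d` there is a finite set `S`
containing `x` and `y` such that every unit-distance preserving map `f : S → ℂⁿ`
satisfies `φₙ(f x, f y) = d²`. -/
def MemD (n : ℕ) (d : ℝ) : Prop :=
  0 < d ∧ ∀ x y : EuclideanSpace ℝ (Fin n), dist x y = d →
    ∃ S : Finset (EuclideanSpace ℝ (Fin n)), x ∈ S ∧ y ∈ S ∧
      ∀ f : EuclideanSpace ℝ (Fin n) → (Fin n → ℂ),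
        UnitPreservingOn n (↑S) f → phi n (f x) (f y) = (d : ℂ) ^ 2

open Matrix Finset

namespace Stmt17

lemma sum_dot {n : ℕ} (f : Fin n → Fin n → ℂ) (v : Fin n → ℂ) :
    (∑ i, f i) ⬝ᵥ v = ∑ i, f i ⬝ᵥ v := by
  simp [dotProduct, Finset.sum_mul]
  exact Finset.sum_comm

lemma phi_eq {n : ℕ} (x y : Fin n → ℂ) : phi n x y = (x - y) ⬝ᵥ (x - y) := by
  simp [phi, dotProduct, sq]

lemma dot_sub_expand {n : ℕ} (u v : Fin n → ℂ) :
    (u - v) ⬝ᵥ (u - v) = u ⬝ᵥ u - 2 * (u ⬝ᵥ v) + v ⬝ᵥ v := by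
  rw [sub_dotProduct, dotProduct_sub, dotProduct_sub, dotProduct_comm v u]; ring

/-- Core algebraic forcing lemma. -/
lemma core {n : ℕ} (hn : 0 < n) (ca cb t EE : ℂ)
    (P : Fin n → (Fin n → ℂ)) (Y : Fin n → ℂ)
    (hE : EE = cb + ((n : ℂ) - 1) * (2 * cb - ca) / 2)
    (hEne : EE ≠ 0) (hca : ca ≠ 0)
    (hP : ∀ i, (P i) ⬝ᵥ (P i) = cb)
    (hPP : ∀ i j, i ≠ j → (P i - P j) ⬝ᵥ (P i - P j) = ca)
    (hY : ∀ i, (Y - P i) ⬝ᵥ (Y - P i) = cb)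
    (ht : t = Y ⬝ᵥ Y) :
    ((n : ℂ) * t = 4 * EE ∨ t = 0) ∧ (t = 0 → Y = 0) := by
  set β : ℂ := (2 * cb - ca) / 2 with hβ
  have hGram : ∀ i j, P i ⬝ᵥ P j = if i = j then cb else β := by
    intro i j
    by_cases h : i = j
    · simp [h, hP]
    · have := hPP i j h
      rw [dot_sub_expand, hP, hP] at this
      simp only [if_neg h]
      rw [hβ]; linear_combination (this - ca) / (-2)
  have hYP : ∀ i, Y ⬝ᵥ P i = t / 2 := by
    intro i
    have := hY i
    rw [dot_sub_expand, hP, ← ht] at this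
    linear_combination (this - cb) / (-2)
  -- dot of a linear combination with P j
  have hcombo : ∀ (g : Fin n → ℂ) (j : Fin n),
      (∑ i, g i • P i) ⬝ᵥ P j = β * (∑ i, g i) + (cb - β) * g j := by
    intro g j
    rw [sum_dot]
    have : ∀ i, (g i • P i) ⬝ᵥ P j = g i * β + (if i = j then (cb - β) * g i else 0) := by
      intro i
      rw [smul_dotProduct, smul_eq_mul, hGram]
      by_cases h : i = j <;> simp [h] <;> ring
    rw [Finset.sum_congr rfl fun i _ => this i]
    rw [Finset.sum_add_distrib, Finset.sum_ite_eq' Finset.univ j (fun i => (cb - β) * g i)]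
    simp [Finset.mem_univ, ← Finset.sum_mul]
    ring
  have hcbβ : cb - β = ca / 2 := by rw [hβ]; ring
  have hEβ : cb + ((n : ℂ) - 1) * β = EE := by rw [hE, hβ]; ring
  -- linear independence
  have hli : LinearIndependent ℂ P := by
    rw [Fintype.linearIndependent_iff]
    intro g hg j
    have hdot : ∀ j₀, β * (∑ i, g i) + (cb - β) * g j₀ = 0 := by
      intro j₀
      rw [← hcombo g j₀, hg, zero_dotProduct]
    have hsumg : (∑ i, g i) = 0 := by
      have hsum : (∑ j₀, (β * (∑ i, g i) + (cb - β) * g j₀)) = 0 :=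
        Finset.sum_eq_zero fun j₀ _ => hdot j₀
      simp only [Finset.sum_add_distrib, Finset.sum_const, Finset.card_univ,
        Fintype.card_fin, nsmul_eq_mul, ← Finset.mul_sum] at hsum
      have h2 : (∑ i, g i) * EE = 0 := by rw [← hEβ]; linear_combination hsum
      exact (mul_eq_zero.1 h2).resolve_right hEne
    have := hdot j
    rw [hsumg, mul_zero, zero_add, hcbβ] at this
    have h2 : (2 : ℂ) ≠ 0 := two_ne_zero
    rcases mul_eq_zero.1 this with h | h
    · exact absurd h (by simp [div_eq_zero_iff, hca])
    · exact h
  haveI : Nonempty (Fin n) := Fin.pos_iff_nonempty.1 hn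
  have hspan : Submodule.span ℂ (Set.range P) = ⊤ :=
    hli.span_eq_top_of_card_eq_finrank (by simp)
  -- the slack vector
  set W : Fin n → ℂ := Y - (t / (2 * EE)) • ∑ i, P i with hW
  have hsumP : ∀ j, (∑ i, P i) ⬝ᵥ P j = EE := by
    intro j
    have h1 : (∑ i, P i) ⬝ᵥ P j = β * (n : ℂ) + (cb - β) := by
      simpa using hcombo (fun _ => 1) j
    rw [h1, ← hEβ]; ring
  have hWP : ∀ j, W ⬝ᵥ P j = 0 := by
    intro j
    rw [hW, sub_dotProduct, smul_dotProduct, hsumP, hYP, smul_eq_mul]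
    field_simp
    ring
  have hW0 : W = 0 := by
    funext j
    have hj : (Pi.single j 1 : Fin n → ℂ) ∈ Submodule.span ℂ (Set.range P) := by
      rw [hspan]; trivial
    obtain ⟨c, hc⟩ := (Submodule.mem_span_range_iff_exists_fun ℂ).1 hj
    have : W ⬝ᵥ (Pi.single j 1) = 0 := by
      rw [← hc, dotProduct_comm, sum_dot]
      refine Finset.sum_eq_zero fun i _ => ?_
      rw [smul_dotProduct, dotProduct_comm, hWP, smul_eq_mul, mul_zero]
    simpa [dotProduct_single] using this
  have hYval : Y = (t / (2 * EE)) • ∑ i, P i := by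
    have := sub_eq_zero.1 (hW ▸ hW0 : Y - (t / (2 * EE)) • ∑ i, P i = 0)
    exact this
  have hPPdot : (∑ i, P i) ⬝ᵥ (∑ i, P i) = (n : ℂ) * EE := by
    rw [sum_dot]
    have h1 : ∀ i : Fin n, P i ⬝ᵥ (∑ k, P k) = EE := fun i => by
      rw [dotProduct_comm]; exact hsumP i
    rw [Finset.sum_congr rfl fun i _ => h1 i]
    simp [Finset.sum_const, mul_comm]
  have hkey : t = t * t * (n : ℂ) / (4 * EE) := by
    conv_lhs => rw [ht, hYval]
    rw [smul_dotProduct, dotProduct_smul, hPPdot, smul_eq_mul, smul_eq_mul]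
    field_simp
    ring
  constructor
  · rcases eq_or_ne t 0 with h | h
    · exact Or.inr h
    · left
      have h4E : (4 : ℂ) * EE ≠ 0 := by simp [hEne]
      rw [eq_div_iff h4E] at hkey
      have h5 : t * (4 * EE) = t * ((n : ℂ) * t) := by linear_combination hkey
      have h6 := mul_left_cancel₀ h h5
      linear_combination -h6
  · intro h0
    rw [hYval, h0]
    simp



lemma iso_exists {n : ℕ} (v v' : EuclideanSpace ℝ (Fin n)) (h : ‖v‖ = ‖v'‖) :
    ∃ L : EuclideanSpace ℝ (Fin n) ≃ₗᵢ[ℝ] EuclideanSpace ℝ (Fin n), L v = v' := by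
  by_cases hvv : v = v'
  · exact ⟨LinearIsometryEquiv.refl ℝ _, by simp [hvv]⟩
  · set w := v - v' with hw
    have hwne : w ≠ 0 := sub_ne_zero.2 hvv
    set K : Submodule ℝ (EuclideanSpace ℝ (Fin n)) := (ℝ ∙ w)ᗮ with hK
    refine ⟨Submodule.reflection K, ?_⟩
    have hm : ((2 : ℝ)⁻¹) • (v + v') ∈ K := by
      rw [hK, Submodule.mem_orthogonal]
      intro u hu
      obtain ⟨c, rfl⟩ := Submodule.mem_span_singleton.1 hu
      have h0 : inner ℝ w (v + v') = (0 : ℝ) := by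
        rw [hw, inner_sub_left, inner_add_right, inner_add_right,
          real_inner_self_eq_norm_sq, real_inner_comm v' v]
        have hv2 : inner ℝ v' v' = ‖v'‖ ^ 2 := real_inner_self_eq_norm_sq v'
        rw [hv2, h]
        ring
      rw [inner_smul_left, inner_smul_right, h0]
      simp
    have hu : ((2 : ℝ)⁻¹) • w ∈ Kᗮ := by
      rw [hK, Submodule.orthogonal_orthogonal]
      exact Submodule.smul_mem _ _ (Submodule.mem_span_singleton_self w)
    have hv : v = ((2 : ℝ)⁻¹) • (v + v') + ((2 : ℝ)⁻¹) • w := by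
      rw [hw]; module
    rw [hv, map_add, Submodule.reflection_mem_subspace_eq_self hm,
      Submodule.reflection_mem_subspace_orthogonalComplement_eq_neg hu]
    rw [hw]; module

lemma dist_eq_of_sq {n : ℕ} (x y : EuclideanSpace ℝ (Fin n)) (r : ℝ) (hr : 0 ≤ r)
    (h : ∑ i, (x i - y i) ^ 2 = r ^ 2) : dist x y = r := by
  rw [EuclideanSpace.dist_eq]
  have h1 : ∀ i, dist (x i) (y i) ^ 2 = (x i - y i) ^ 2 := by
    intro i; rw [Real.dist_eq, sq_abs]
  rw [Finset.sum_congr rfl fun i _ => h1 i, h, Real.sqrt_sq hr]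

lemma norm_eq_of_sq {n : ℕ} (x : EuclideanSpace ℝ (Fin n)) (r : ℝ) (hr : 0 ≤ r)
    (h : ∑ i, (x i) ^ 2 = r ^ 2) : ‖x‖ = r := by
  have := dist_eq_of_sq x 0 r hr (by simpa using h)
  simpa using this

lemma sum_adj2 {n : ℕ} (i j : Fin n) (hij : i ≠ j) (f : Fin n → ℝ) (A B C : ℝ)
    (hf : ∀ k, f k = A + (if k = i then B else if k = j then C else 0)) :
    ∑ k, f k = n * A + B + C := by
  have h2 : ∀ k, f k = A + ((if k = i then B else 0) + (if k = j then C else 0)) := by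
    intro k
    rw [hf k]
    by_cases h : k = i
    · subst h; simp [hij]
    · by_cases h' : k = j
      · subst h'; simp [h, Ne.symm hij]
      · simp [h, h']
  rw [Finset.sum_congr rfl fun k _ => h2 k]
  simp [Finset.sum_add_distrib, Finset.sum_ite_eq' Finset.univ, Finset.sum_const,
    Finset.card_univ, nsmul_eq_mul]
  ring

lemma sum_adj1 {n : ℕ} (i : Fin n) (f : Fin n → ℝ) (A B : ℝ)
    (hf : ∀ k, f k = A + (if k = i then B else 0)) :
    ∑ k, f k = n * A + B := by
  rw [Finset.sum_congr rfl fun k _ => hf k]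
  simp [Finset.sum_add_distrib, Finset.sum_ite_eq' Finset.univ, Finset.sum_const,
    Finset.card_univ, nsmul_eq_mul]


lemma config {n : ℕ} (hn : 3 ≤ n) (a b D : ℝ) (ha : 0 < a) (hb : 0 < b) (hD : 0 < D)
    (hrel : b ^ 2 = a ^ 2 * ((n : ℝ) - 1) / (2 * (n : ℝ)) + D ^ 2 / 4)
    (x y : EuclideanSpace ℝ (Fin n)) (hxy : dist x y = D) :
    ∃ p : Fin n → EuclideanSpace ℝ (Fin n),
      (∀ i j, i ≠ j → dist (p i) (p j) = a) ∧ (∀ i, dist x (p i) = b) ∧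
      (∀ i, dist y (p i) = b) := by
  have hn0 : 0 < n := by omega
  have hnR : (0 : ℝ) < n := by exact_mod_cast hn0
  have cancel : ∀ X : ℝ, 4 * (n:ℝ)^2 * X = 0 → X = 0 := by
    intro X hX
    rcases mul_eq_zero.1 hX with h | h
    · exact absurd h (by positivity)
    · exact h
  obtain ⟨s, hs2, hs0⟩ : ∃ s : ℝ, s ^ 2 = n ∧ 0 < s :=
    ⟨Real.sqrt n, Real.sq_sqrt hnR.le, Real.sqrt_pos.2 hnR⟩
  obtain ⟨α, hα2⟩ : ∃ α : ℝ, α ^ 2 = a ^ 2 / 2 :=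
    ⟨a / Real.sqrt 2, by rw [div_pow, Real.sq_sqrt] <;> norm_num⟩
  obtain ⟨τ, hτ⟩ : ∃ τ : ℝ, 2 * (n:ℝ) * τ = D * s - 2 * α :=
    ⟨(D * s - 2 * α) / (2 * n), by field_simp⟩
  obtain ⟨σ, hσ⟩ : ∃ σ : ℝ, (n:ℝ) * σ = D * s :=
    ⟨D * s / n, by field_simp⟩
  have hrel' : 4 * (n:ℝ) * b ^ 2 = 2 * a ^ 2 * ((n:ℝ) - 1) + (n:ℝ) * D ^ 2 := by
    field_simp at hrel
    linear_combination hrel / 2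
  set y0 : EuclideanSpace ℝ (Fin n) := WithLp.toLp 2 (fun _ => σ) with hy0
  set p0 : Fin n → EuclideanSpace ℝ (Fin n) :=
    (fun i => WithLp.toLp 2 (fun k => (if k = i then α else 0) + τ)) with hp0
  have hkey1 : (n:ℝ) * τ^2 + ((α+τ)^2 - τ^2) = b^2 := by
    have H : 4 * (n:ℝ)^2 * ((n:ℝ) * τ^2 + ((α+τ)^2 - τ^2) - b^2) = 0 := by
      linear_combination (2*(n:ℝ)^2*τ + (n:ℝ)*D*s + 2*(n:ℝ)*α) * hτ + (n:ℝ)*D^2*hs2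
        + 4*(n:ℝ)*((n:ℝ)-1)*hα2 - (n:ℝ)*hrel'
    linarith [cancel _ H]
  have hkey2 : (n:ℝ) * (σ-τ)^2 + ((σ-τ-α)^2 - (σ-τ)^2) = b^2 := by
    have H : 4 * (n:ℝ)^2 * ((n:ℝ) * (σ-τ)^2 + ((σ-τ-α)^2 - (σ-τ)^2) - b^2) = 0 := by
      linear_combination (2*(n:ℝ)^2*σ - 2*(n:ℝ)^2*τ + (n:ℝ)*D*s - 2*(n:ℝ)*α) * (2*hσ - hτ)
        + (n:ℝ)*D^2*hs2 + 4*(n:ℝ)*((n:ℝ)-1)*hα2 - (n:ℝ)*hrel'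
    linarith [cancel _ H]
  have hy0n : ‖y0‖ = D := by
    apply norm_eq_of_sq _ _ hD.le
    have h1 : ∀ k : Fin n, (y0 k) ^ 2 = σ^2 + (if k = (⟨0, by omega⟩ : Fin n) then 0 else 0) := by
      intro k; simp [hy0]
    rw [sum_adj1 _ _ _ _ h1]
    have H : (n:ℝ) * ((n:ℝ) * σ^2 + 0 - D^2) = 0 := by
      linear_combination ((n:ℝ)*σ + D*s) * hσ + D^2*hs2
    have hne : (n:ℝ) ≠ 0 := hnR.ne'
    rcases mul_eq_zero.1 H with h | h
    · exact absurd h hne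
    · linarith
  obtain ⟨L, hL⟩ := iso_exists y0 (y - x) (by rw [hy0n, ← dist_eq_norm, dist_comm, hxy])
  refine ⟨fun i => x + L (p0 i), ?_, ?_, ?_⟩
  · intro i j hij
    rw [dist_eq_norm, add_sub_add_left_eq_sub, ← map_sub, L.norm_map]
    apply norm_eq_of_sq _ _ ha.le
    have key : ∀ k : Fin n, ((p0 i - p0 j) k) ^ 2 =
        0 + (if k = i then α ^ 2 else if k = j then α ^ 2 else 0) := by
      intro k
      show ((p0 i k) - (p0 j k)) ^ 2 = _
      simp only [hp0]
      by_cases h : k = i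
      · subst h; simp [hij]; try ring
      · by_cases h' : k = j
        · subst h'; simp [h]; try ring
        · simp [h, h']
    rw [sum_adj2 i j hij _ 0 (α^2) (α^2) key, hα2]
    ring
  · intro i
    rw [dist_eq_norm, show x - (x + L (p0 i)) = -(L (p0 i)) by abel, norm_neg, L.norm_map]
    apply norm_eq_of_sq _ _ hb.le
    have key : ∀ k : Fin n, (p0 i k) ^ 2 = τ^2 + (if k = i then (α+τ)^2 - τ^2 else 0) := by
      intro k
      simp only [hp0]
      by_cases h : k = i
      · subst h; simp; try ring
      · simp [h]; try ring
    rw [sum_adj1 i _ (τ^2) ((α+τ)^2 - τ^2) key]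
    linear_combination hkey1
  · intro i
    have hyx : y = x + L y0 := by rw [hL]; abel
    rw [hyx, dist_eq_norm, add_sub_add_left_eq_sub, ← map_sub, L.norm_map]
    apply norm_eq_of_sq _ _ hb.le
    have key : ∀ k : Fin n, ((y0 - p0 i) k) ^ 2 =
        (σ-τ)^2 + (if k = i then (σ-τ-α)^2 - (σ-τ)^2 else 0) := by
      intro k
      show ((y0 k) - (p0 i k)) ^ 2 = _
      simp only [hp0, hy0]
      by_cases h : k = i
      · subst h; simp; try ring
      · simp [h]; try ring
    rw [sum_adj1 i _ _ _ key]
    linear_combination hkey2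

lemma link {n : ℕ} (hn : 3 ≤ n) (D ℓ : ℝ) (hD : 0 < D) (hl : 0 < ℓ) (hl2 : ℓ ≤ 2 * D)
    (x y : EuclideanSpace ℝ (Fin n)) (hxy : dist x y = D) :
    ∃ z : EuclideanSpace ℝ (Fin n), dist x z = D ∧ dist y z = ℓ := by
  have hn0 : 0 < n := by omega
  have hnR : (0 : ℝ) < n := by exact_mod_cast hn0
  obtain ⟨s, hs2, hs0⟩ : ∃ s : ℝ, s ^ 2 = n ∧ 0 < s :=
    ⟨Real.sqrt n, Real.sq_sqrt hnR.le, Real.sqrt_pos.2 hnR⟩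
  obtain ⟨sc, hsc⟩ : ∃ sc : ℝ, sc * (2 * D) = 2 * D ^ 2 - ℓ ^ 2 :=
    ⟨(2 * D ^ 2 - ℓ ^ 2) / (2 * D), by field_simp⟩
  have hsc2 : D ^ 2 - sc ^ 2 ≥ 0 := by
    have h4 : ℓ ^ 2 ≤ 4 * D ^ 2 := by nlinarith
    have key : (D ^ 2 - sc ^ 2) * (4 * D ^ 2) = ℓ ^ 2 * (4 * D ^ 2 - ℓ ^ 2) := by
      linear_combination (-(sc * (2 * D) + 2 * D ^ 2 - ℓ ^ 2)) * hsc
    nlinarith [mul_pos hD hD, sq_nonneg ℓ, mul_nonneg (sq_nonneg ℓ) (by linarith : (0:ℝ) ≤ 4 * D ^ 2 - ℓ ^ 2)]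
  obtain ⟨tc, htc⟩ : ∃ tc : ℝ, tc ^ 2 = D ^ 2 - sc ^ 2 :=
    ⟨Real.sqrt (D ^ 2 - sc ^ 2), Real.sq_sqrt hsc2⟩
  obtain ⟨c1, hc1⟩ : ∃ c1 : ℝ, c1 ^ 2 = tc ^ 2 / 2 :=
    ⟨tc / Real.sqrt 2, by rw [div_pow, Real.sq_sqrt] <;> norm_num⟩
  obtain ⟨σ, hσ⟩ : ∃ σ : ℝ, (n:ℝ) * σ = D * s := ⟨D * s / n, by field_simp⟩
  obtain ⟨σ2, hσ2⟩ : ∃ σ2 : ℝ, (n:ℝ) * σ2 = sc * s := ⟨sc * s / n, by field_simp⟩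
  have hnne : (n:ℝ) ≠ 0 := hnR.ne'
  set i0 : Fin n := ⟨0, by omega⟩ with hi0
  set i1 : Fin n := ⟨1, by omega⟩ with hi1
  have h01 : i0 ≠ i1 := by simp [hi0, hi1, Fin.ext_iff]
  set y0 : EuclideanSpace ℝ (Fin n) := WithLp.toLp 2 (fun _ => σ) with hy0
  set z0 : EuclideanSpace ℝ (Fin n) :=
    WithLp.toLp 2 (fun k => σ2 + (if k = i0 then c1 else if k = i1 then -c1 else 0)) with hz0
  have hy0n : ‖y0‖ = D := by
    apply norm_eq_of_sq _ _ hD.le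
    have h1 : ∀ k : Fin n, (y0 k) ^ 2 = σ^2 + (if k = i0 then 0 else 0) := by
      intro k; simp [hy0]
    rw [sum_adj1 _ _ _ _ h1]
    have H : (n:ℝ) * ((n:ℝ) * σ^2 + 0 - D^2) = 0 := by
      linear_combination ((n:ℝ)*σ + D*s) * hσ + D^2*hs2
    rcases mul_eq_zero.1 H with h | h
    · exact absurd h hnne
    · linarith
  obtain ⟨L, hL⟩ := iso_exists y0 (y - x) (by rw [hy0n, ← dist_eq_norm, dist_comm, hxy])
  refine ⟨x + L z0, ?_, ?_⟩
  · rw [dist_eq_norm, show x - (x + L z0) = -(L z0) by abel, norm_neg, L.norm_map]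
    apply norm_eq_of_sq _ _ hD.le
    have key : ∀ k : Fin n, (z0 k) ^ 2 = σ2^2 +
        (if k = i0 then (σ2+c1)^2 - σ2^2 else if k = i1 then (σ2-c1)^2 - σ2^2 else 0) := by
      intro k
      simp only [hz0]
      by_cases h : k = i0
      · subst h; simp [h01, Ne.symm]; try ring
      · by_cases h' : k = i1
        · subst h'; simp [h]; try ring
        · simp [h, h']
    rw [sum_adj2 i0 i1 h01 _ _ _ _ key]
    have H : (n:ℝ) * ((n:ℝ) * σ2^2 + ((σ2+c1)^2 - σ2^2) + ((σ2-c1)^2 - σ2^2) - D^2) = 0 := by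
      linear_combination ((n:ℝ)*σ2 + sc*s)*hσ2 + sc^2*hs2 + 2*(n:ℝ)*hc1 + (n:ℝ)*htc
    rcases mul_eq_zero.1 H with h | h
    · exact absurd h hnne
    · linarith
  · have hyx : y = x + L y0 := by rw [hL]; abel
    rw [hyx, dist_eq_norm, add_sub_add_left_eq_sub, ← map_sub, L.norm_map]
    apply norm_eq_of_sq _ _ hl.le
    have key : ∀ k : Fin n, ((y0 - z0) k) ^ 2 = (σ-σ2)^2 +
        (if k = i0 then (σ-σ2-c1)^2 - (σ-σ2)^2 else if k = i1 then (σ-σ2+c1)^2 - (σ-σ2)^2 else 0) := by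
      intro k
      show ((y0 k) - (z0 k)) ^ 2 = _
      simp only [hz0, hy0]
      by_cases h : k = i0
      · subst h; simp [h01, Ne.symm]; try ring
      · by_cases h' : k = i1
        · subst h'; simp [h]; try ring
        · simp [h, h']
    rw [sum_adj2 i0 i1 h01 _ _ _ _ key]
    have H : (n:ℝ) * ((n:ℝ)*(σ-σ2)^2 + ((σ-σ2-c1)^2 - (σ-σ2)^2) + ((σ-σ2+c1)^2 - (σ-σ2)^2) - ℓ^2) = 0 := by
      linear_combination ((n:ℝ)*(σ-σ2) + (D-sc)*s)*(hσ - hσ2) + (D-sc)^2*hs2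
        + 2*(n:ℝ)*hc1 + (n:ℝ)*htc - (n:ℝ)*hsc
    rcases mul_eq_zero.1 H with h | h
    · exact absurd h hnne
    · linarith


lemma phi_comm {n : ℕ} (u v : Fin n → ℂ) : phi n u v = phi n v u := by
  unfold phi
  exact Finset.sum_congr rfl fun i _ => by ring

lemma forceD {n : ℕ} (hn : 3 ≤ n) (a b ℓ D : ℝ)
    (ha : 0 < a) (hb : 0 < b) (hl : 0 < ℓ) (hD : 0 < D)
    (hrel : (n:ℝ) * D ^ 2 = 4 * (n:ℝ) * b ^ 2 - 2 * ((n:ℝ) - 1) * a ^ 2)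
    (hl2 : ℓ ≤ 2 * D) (hlD : ℓ ≠ D)
    (hma : MemD n a) (hmb : MemD n b) (hml : MemD n ℓ) : MemD n D := by
  classical
  have hn0 : 0 < n := by omega
  have hnR : (0:ℝ) < n := by exact_mod_cast hn0
  refine ⟨hD, ?_⟩
  intro x y hxy
  have hrel2 : b ^ 2 = a ^ 2 * ((n : ℝ) - 1) / (2 * (n : ℝ)) + D ^ 2 / 4 := by
    field_simp
    linear_combination (-2 : ℝ) * hrel
  obtain ⟨p, hpp, hpx, hpy⟩ := config hn a b D ha hb hD hrel2 x y hxy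
  obtain ⟨y2, hy2x, hy2y⟩ := link hn D ℓ hD hl hl2 x y hxy
  obtain ⟨p', hpp', hp'x, hp'y2⟩ := config hn a b D ha hb hD hrel2 x y2 hy2x
  choose A hA1 hA2 hA3 using fun i j (h : i ≠ j) => hma.2 (p i) (p j) (hpp i j h)
  choose A' hA'1 hA'2 hA'3 using fun i j (h : i ≠ j) => hma.2 (p' i) (p' j) (hpp' i j h)
  choose Bx hBx1 hBx2 hBx3 using fun i => hmb.2 x (p i) (hpx i)
  choose By hBy1 hBy2 hBy3 using fun i => hmb.2 y (p i) (hpy i)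
  choose Bx' hBx'1 hBx'2 hBx'3 using fun i => hmb.2 x (p' i) (hp'x i)
  choose By' hBy'1 hBy'2 hBy'3 using fun i => hmb.2 y2 (p' i) (hp'y2 i)
  obtain ⟨LS, hL1, hL2, hL3⟩ := hml.2 y y2 hy2y
  set S : Finset (EuclideanSpace ℝ (Fin n)) :=
    (({x, y} : Finset (EuclideanSpace ℝ (Fin n))) ∪
      (Finset.univ.biUnion fun i => Bx i ∪ By i ∪ Bx' i ∪ By' i) ∪
      (Finset.univ.biUnion fun i => Finset.univ.biUnion fun j =>
        if h : i ≠ j then A i j h ∪ A' i j h else ∅) ∪ LS) with hS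
  have hxS : x ∈ S := by
    rw [hS]
    exact Finset.mem_union_left _ (Finset.mem_union_left _ (Finset.mem_union_left _ (by simp)))
  have hyS : y ∈ S := by
    rw [hS]
    exact Finset.mem_union_left _ (Finset.mem_union_left _ (Finset.mem_union_left _ (by simp)))
  refine ⟨S, hxS, hyS, ?_⟩
  intro f hf
  have mono : ∀ T : Finset (EuclideanSpace ℝ (Fin n)), T ⊆ S → UnitPreservingOn n (↑T) f := by
    intro T hT u hu v hv h1
    exact hf u (Finset.mem_coe.2 (hT (Finset.mem_coe.1 hu))) v
      (Finset.mem_coe.2 (hT (Finset.mem_coe.1 hv))) h1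
  -- subset facts
  have subB : ∀ i, (Bx i ∪ By i ∪ Bx' i ∪ By' i) ⊆ S := by
    intro i
    rw [hS]
    intro z hz
    exact Finset.mem_union_left _ (Finset.mem_union_left _ (Finset.mem_union_right _
      (Finset.mem_biUnion.2 ⟨i, Finset.mem_univ i, hz⟩)))
  have subA : ∀ i j (h : i ≠ j), (A i j h ∪ A' i j h) ⊆ S := by
    intro i j h
    rw [hS]
    intro z hz
    refine Finset.mem_union_left _ (Finset.mem_union_right _ ?_)
    refine Finset.mem_biUnion.2 ⟨i, Finset.mem_univ i, Finset.mem_biUnion.2 ⟨j, Finset.mem_univ j, ?_⟩⟩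
    rw [dif_pos h]
    exact hz
  have subL : LS ⊆ S := by
    rw [hS]; intro z hz; exact Finset.mem_union_right _ hz
  -- forced phi values
  have fA : ∀ i j (h : i ≠ j), phi n (f (p i)) (f (p j)) = (a:ℂ)^2 := fun i j h =>
    hA3 i j h f (mono _ (fun z hz => subA i j h (Finset.mem_union_left _ hz)))
  have fA' : ∀ i j (h : i ≠ j), phi n (f (p' i)) (f (p' j)) = (a:ℂ)^2 := fun i j h =>
    hA'3 i j h f (mono _ (fun z hz => subA i j h (Finset.mem_union_right _ hz)))
  have fBx : ∀ i, phi n (f x) (f (p i)) = (b:ℂ)^2 := fun i =>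
    hBx3 i f (mono _ (fun z hz => subB i (by simp [Finset.mem_union]; tauto)))
  have fBy : ∀ i, phi n (f y) (f (p i)) = (b:ℂ)^2 := fun i =>
    hBy3 i f (mono _ (fun z hz => subB i (by simp [Finset.mem_union]; tauto)))
  have fBx' : ∀ i, phi n (f x) (f (p' i)) = (b:ℂ)^2 := fun i =>
    hBx'3 i f (mono _ (fun z hz => subB i (by simp [Finset.mem_union]; tauto)))
  have fBy' : ∀ i, phi n (f y2) (f (p' i)) = (b:ℂ)^2 := fun i =>
    hBy'3 i f (mono _ (fun z hz => subB i (by simp [Finset.mem_union]; tauto)))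
  have fL : phi n (f y) (f y2) = (ℓ:ℂ)^2 := hL3 f (mono _ subL)
  -- complex algebra
  set ca : ℂ := (a:ℂ)^2 with hca'
  set cb : ℂ := (b:ℂ)^2 with hcb'
  set EE : ℂ := cb + ((n : ℂ) - 1) * (2 * cb - ca) / 2 with hEE
  have hre : 4 * (b^2 + ((n:ℝ)-1)*(2*b^2 - a^2)/2) = (n:ℝ) * D^2 := by
    linear_combination -hrel
  have hEE4 : 4 * EE = (n:ℂ) * (D:ℂ)^2 := by
    rw [hEE, hca', hcb']
    have := congrArg (fun r : ℝ => (r : ℂ)) hre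
    push_cast at this
    linear_combination this
  have hnC : (n:ℂ) ≠ 0 := Nat.cast_ne_zero.2 hn0.ne'
  have hDC : (D:ℂ) ≠ 0 := Complex.ofReal_ne_zero.2 hD.ne'
  have hEne : EE ≠ 0 := by
    intro h0
    rw [h0, mul_zero] at hEE4
    exact (mul_ne_zero hnC (pow_ne_zero 2 hDC)) hEE4.symm
  have hcane : ca ≠ 0 := by
    rw [hca']
    exact pow_ne_zero 2 (Complex.ofReal_ne_zero.2 ha.ne')
  set P : Fin n → (Fin n → ℂ) := fun i => f (p i) - f x with hP'
  set P2 : Fin n → (Fin n → ℂ) := fun i => f (p' i) - f x with hP2'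
  set Y : Fin n → ℂ := f y - f x with hY'
  set Y2 : Fin n → ℂ := f y2 - f x with hY2'
  have hPdot : ∀ i, (P i) ⬝ᵥ (P i) = cb := by
    intro i
    rw [hP', ← phi_eq, phi_comm]
    exact fBx i
  have hPPdot : ∀ i j, i ≠ j → (P i - P j) ⬝ᵥ (P i - P j) = ca := by
    intro i j h
    rw [hP', show (f (p i) - f x) - (f (p j) - f x) = f (p i) - f (p j) by abel, ← phi_eq]
    exact fA i j h
  have hYdot : ∀ i, (Y - P i) ⬝ᵥ (Y - P i) = cb := by
    intro i
    rw [hY', hP', show (f y - f x) - (f (p i) - f x) = f y - f (p i) by abel, ← phi_eq]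
    exact fBy i
  have hP2dot : ∀ i, (P2 i) ⬝ᵥ (P2 i) = cb := by
    intro i
    rw [hP2', ← phi_eq, phi_comm]
    exact fBx' i
  have hPP2dot : ∀ i j, i ≠ j → (P2 i - P2 j) ⬝ᵥ (P2 i - P2 j) = ca := by
    intro i j h
    rw [hP2', show (f (p' i) - f x) - (f (p' j) - f x) = f (p' i) - f (p' j) by abel, ← phi_eq]
    exact fA' i j h
  have hY2dot : ∀ i, (Y2 - P2 i) ⬝ᵥ (Y2 - P2 i) = cb := by
    intro i
    rw [hY2', hP2', show (f y2 - f x) - (f (p' i) - f x) = f y2 - f (p' i) by abel, ← phi_eq]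
    exact fBy' i
  obtain ⟨hor1, hzero1⟩ := core hn0 ca cb (Y ⬝ᵥ Y) EE P Y hEE hEne hcane hPdot hPPdot hYdot rfl
  obtain ⟨hor2, _⟩ := core hn0 ca cb (Y2 ⬝ᵥ Y2) EE P2 Y2 hEE hEne hcane hP2dot hPP2dot hY2dot rfl
  have hphit : phi n (f x) (f y) = Y ⬝ᵥ Y := by
    rw [phi_comm, phi_eq, hY']
  have hphit2 : phi n (f x) (f y2) = Y2 ⬝ᵥ Y2 := by
    rw [phi_comm, phi_eq, hY2']
  rcases hor1 with h1 | h1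
  · -- n * t = 4 * EE = n * D^2, so t = D^2
    rw [hphit]
    have : (n:ℂ) * (Y ⬝ᵥ Y) = (n:ℂ) * (D:ℂ)^2 := by rw [h1, hEE4]
    exact mul_left_cancel₀ hnC this
  · -- collapse case: f y = f x
    exfalso
    have hfy : f y = f x := by
      have := hzero1 h1
      rw [hY'] at this
      exact sub_eq_zero.1 this
    have hL2' : phi n (f x) (f y2) = (ℓ:ℂ)^2 := by rw [← hfy]; exact fL
    have hll : (ℓ:ℂ)^2 = Y2 ⬝ᵥ Y2 := by rw [← hL2', hphit2]
    rcases hor2 with h2 | h2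
    · -- ℓ² = D²
      have hc : (n:ℂ) * (ℓ:ℂ)^2 = (n:ℂ) * (D:ℂ)^2 := by
        rw [hll, h2, hEE4]
      have hc2 : (ℓ:ℂ)^2 = (D:ℂ)^2 := mul_left_cancel₀ hnC hc
      have hr2 : ℓ^2 = D^2 := by
        have := hc2
        push_cast at this
        exact_mod_cast this
      have hfac : (ℓ - D) * (ℓ + D) = 0 := by linear_combination hr2
      rcases mul_eq_zero.1 hfac with h | h
      · exact hlD (by linarith)
      · linarith
    · -- ℓ² = 0
      rw [← hll] at h2
      have : ℓ = 0 := by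
        have := h2
        push_cast at this
        exact_mod_cast pow_eq_zero_iff (by norm_num) |>.1 this
      linarith



end Stmt17

open Stmt17 in
theorem stmt17 (n : ℕ) (hn : 3 ≤ n) (d : ℝ) (hd : MemD n d) :
    MemD n ((2 / n) * d) := by
  have hn0 : 0 < n := by omega
  have hnR : (0:ℝ) < n := by exact_mod_cast hn0
  have hnR1 : (1:ℝ) ≤ n := by exact_mod_cast hn0
  have hd0 : 0 < d := hd.1
  obtain ⟨lam, hlam2''⟩ : ∃ lam : ℝ, lam ^ 2 * (n:ℝ) = 2 * (n:ℝ) + 2 ∧ 0 ≤ lam := by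
    refine ⟨Real.sqrt ((2*(n:ℝ)+2)/(n:ℝ)), ?_, Real.sqrt_nonneg _⟩
    rw [Real.sq_sqrt (by positivity)]
    field_simp
  obtain ⟨hlam2'', hlam0⟩ := hlam2''
  obtain ⟨ε, hε⟩ : ∃ ε : ℝ, ε * (n:ℝ) = 2 := ⟨2 / n, by field_simp⟩
  have hε0 : 0 < ε := by nlinarith
  have hsq2 : 2 ≤ lam ^ 2 := by nlinarith
  have hlam1 : 1 < lam := by nlinarith
  have hlamle2 : lam ≤ 2 := by nlinarith
  have hlam2ε : lam ^ 2 = ε + 2 := by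
    have h1 : (lam ^ 2 - ε - 2) * (n:ℝ) = 0 := by linear_combination hlam2'' - hε
    rcases mul_eq_zero.1 h1 with h | h
    · linarith
    · exact absurd h hnR.ne'
  -- the ladder of distances lam^j * d
  have hlad : ∀ j : ℕ, MemD n (lam ^ j * d) := by
    intro j
    induction j with
    | zero => simpa using hd
    | succ j ih =>
      have hpj : 0 < lam ^ j * d := by positivity
      have hpj1 : 0 < lam ^ (j+1) * d := by positivity
      refine forceD hn (lam ^ j * d) (lam ^ j * d) (lam ^ j * d) (lam ^ (j+1) * d)
        hpj hpj hpj hpj1 ?_ ?_ ?_ ih ih ih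
      · linear_combination (lam ^ j * d) ^ 2 * hlam2''
      · have h1 : lam ^ j ≤ lam ^ (j+1) := by
          have := pow_le_pow_right₀ hlam1.le (Nat.le_succ j)
          exact this
        nlinarith
      · have h1 : lam ^ j * d < lam ^ (j+1) * d := by
          have h2 : lam ^ j < lam ^ (j+1) := by
            have := pow_lt_pow_right₀ hlam1 (Nat.lt_succ_self j)
            exact this
          nlinarith
        exact h1.ne
  -- rung distances e k = ε * (lam^k * d)
  have hrungstep : ∀ k : ℕ, MemD n (ε * (lam ^ (k+1) * d)) → MemD n (ε * (lam ^ k * d)) := by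
    intro k ihk
    have hpk : 0 < ε * (lam ^ k * d) := by positivity
    have hpk1 : 0 < ε * (lam ^ (k+1) * d) := by positivity
    refine forceD hn (lam ^ (k+1) * d) (lam ^ k * d) (ε * (lam ^ (k+1) * d)) (ε * (lam ^ k * d))
      (by positivity) (by positivity) hpk1 hpk ?_ ?_ ?_ (hlad (k+1)) (hlad k) ihk
    · linear_combination (2*((n:ℝ)-1)*((lam ^ k * d)^2)) * hlam2ε + ((ε+2)*((lam ^ k * d)^2)) * hε
    · have h4 : ε * (lam ^ (k+1) * d) = lam * (ε * (lam ^ k * d)) := by ring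
      rw [h4]
      exact mul_le_mul_of_nonneg_right hlamle2 hpk.le
    · have h2 : ε * (lam ^ k * d) < ε * (lam ^ (k+1) * d) := by
        have h3 : lam ^ k < lam ^ (k+1) := pow_lt_pow_right₀ hlam1 (Nat.lt_succ_self k)
        have h4 : 0 < ε * d := mul_pos hε0 hd0
        calc ε * (lam ^ k * d) = (ε*d) * lam ^ k := by ring
        _ < (ε*d) * lam ^ (k+1) := by exact mul_lt_mul_of_pos_left h3 h4
        _ = ε * (lam ^ (k+1) * d) := by ring
      exact h2.ne'
  -- the first rung
  obtain ⟨K, hK⟩ := pow_unbounded_of_one_lt (n:ℝ) hlam1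
  have hlamK : 0 < lam ^ K := pow_pos (lt_trans one_pos hlam1) K
  have hεK : 2 < ε * lam ^ K := by
    calc (2:ℝ) = ε * n := hε.symm
    _ < ε * lam ^ K := by exact mul_lt_mul_of_pos_left hK hε0
  have hrungK : MemD n (ε * (lam ^ K * d)) := by
    have hpk : 0 < ε * (lam ^ K * d) := by positivity
    by_cases hcase : d = ε * (lam ^ K * d)
    · -- use ℓ = lam * d
      refine forceD hn (lam ^ (K+1) * d) (lam ^ K * d) (lam * d) (ε * (lam ^ K * d))
        (by positivity) (by positivity) (by positivity) hpk ?_ ?_ ?_ (hlad (K+1)) (hlad K)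
        (by simpa using hlad 1)
      · linear_combination (2*((n:ℝ)-1)*((lam ^ K * d)^2)) * hlam2ε + ((ε+2)*((lam ^ K * d)^2)) * hε
      · nlinarith
      · intro hbad
        rw [← hcase] at hbad
        nlinarith
    · refine forceD hn (lam ^ (K+1) * d) (lam ^ K * d) d (ε * (lam ^ K * d))
        (by positivity) (by positivity) hd0 hpk ?_ ?_ ?_ (hlad (K+1)) (hlad K) hd
      · linear_combination (2*((n:ℝ)-1)*((lam ^ K * d)^2)) * hlam2ε + ((ε+2)*((lam ^ K * d)^2)) * hε
      · nlinarith
      · exact fun hbad => hcase hbad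
  -- walk down
  have hdown : ∀ m : ℕ, MemD n (ε * (lam ^ (K - m) * d)) := by
    intro m
    induction m with
    | zero => simpa using hrungK
    | succ m ih =>
      rcases Nat.lt_or_ge m K with h | h
      · have heq : K - m = (K - (m+1)) + 1 := by omega
        rw [heq] at ih
        exact hrungstep _ ih
      · have h1 : K - m = 0 := by omega
        have h2 : K - (m+1) = 0 := by omega
        rw [h2]
        rw [h1] at ih
        exact ih
  have hfin := hdown K
  simp only [Nat.sub_self, pow_zero, one_mul] at hfin
  have hεval : ε = 2 / (n:ℝ) := by
    rw [eq_div_iff hnR.ne']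
    exact hε
  rw [hεval] at hfin
  exact hfin
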